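/- Let G be a finite group and U, V ≤ G × G subgroups each containing the diagonal Δ(G), such that G' ∩ k₁(U) = k₁(U') and G' ∩ k₁(V) = k₁(V') (i.e., U and V are extensible). Then G' ∩ k₁(U∗V) = k₁((U∗V)') if and only if k₁(U∗V) ∩ G' = (k₁(U) ∩ G')(k₁(V) ∩ G'). -/

import Mathlib

def twistedDiag {G : Type*} [Group G] (φ : G ≃* G) : Subgroup (G × G) :=
  ((MonoidHom.id G).prod φ.toMonoidHom).range

def k1 {G H : Type*} [Group G] [Group H] (U : Subgroup (G × H)) : Subgroup G :=
  U.comap (MonoidHom.inl G H)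

def k2 {G H : Type*} [Group G] [Group H] (U : Subgroup (G × H)) : Subgroup H :=
  U.comap (MonoidHom.inr G H)

/-- The ∗-product of subgroups `U ≤ F × G` and `V ≤ G × H`. -/
def starProd {F G H : Type*} [Group F] [Group G] [Group H]
    (U : Subgroup (F × G)) (V : Subgroup (G × H)) : Subgroup (F × H) where
  carrier := {x | ∃ g : G, (x.1, g) ∈ U ∧ (g, x.2) ∈ V}
  one_mem' := ⟨1, U.one_mem, V.one_mem⟩
  mul_mem' := by
    rintro a b ⟨x, hx1, hx2⟩ ⟨y, hy1, hy2⟩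
    exact ⟨x * y, U.mul_mem hx1 hy1, V.mul_mem hx2 hy2⟩
  inv_mem' := by
    rintro a ⟨x, h1, h2⟩
    exact ⟨x⁻¹, U.inv_mem h1, V.inv_mem h2⟩

open Pointwise

/-- The diagonal subgroup `Δ(G) = {(g,g)} ≤ G × G`. -/
def diag (G : Type*) [Group G] : Subgroup (G × G) :=
  twistedDiag (MulEquiv.refl G)

lemma mem_diag {G : Type*} [Group G] (g : G) : (g, g) ∈ diag G := ⟨g, rfl⟩

lemma mem_k1 {G H : Type*} [Group G] [Group H] {U : Subgroup (G × H)} {g : G} :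
    g ∈ k1 U ↔ ((g, 1) : G × H) ∈ U := Iff.rfl

lemma commSub_le {G : Type*} [Group G] (U : Subgroup G) : ⁅U, U⁆ ≤ U := by
  rw [Subgroup.commutator_le]
  intro p hp q hq
  exact U.mul_mem (U.mul_mem (U.mul_mem hp hq) (U.inv_mem hp)) (U.inv_mem hq)

lemma k1_commutator_le {G : Type*} [Group G] (U : Subgroup (G × G)) :
    k1 ⁅U, U⁆ ≤ commutator G := by
  intro g hg
  have h1 : ((g, 1) : G × G) ∈ ⁅(⊤ : Subgroup (G × G)), ⊤⁆ :=
    Subgroup.commutator_mono le_top le_top hg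
  have h2 := Subgroup.mem_map_of_mem (MonoidHom.fst G G) h1
  rw [Subgroup.map_commutator] at h2
  rw [commutator_def]
  exact Subgroup.commutator_mono le_top le_top h2

lemma left_le_starProd {G : Type*} [Group G] (U V : Subgroup (G × G))
    (hV : diag G ≤ V) : U ≤ starProd U V := by
  rintro ⟨a, b⟩ h
  exact ⟨b, h, hV (mem_diag b)⟩

lemma right_le_starProd {G : Type*} [Group G] (U V : Subgroup (G × G))
    (hU : diag G ≤ U) : V ≤ starProd U V := by
  rintro ⟨a, b⟩ h
  exact ⟨a, hU (mem_diag a), h⟩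

lemma commutator_starProd_le {G : Type*} [Group G] (U V : Subgroup (G × G)) :
    ⁅starProd U V, starProd U V⁆ ≤ starProd ⁅U, U⁆ ⁅V, V⁆ := by
  rw [Subgroup.commutator_le]
  rintro ⟨a, b⟩ ⟨x, hx1, hx2⟩ ⟨c, d⟩ ⟨y, hy1, hy2⟩
  open scoped commutatorElement in refine ⟨⁅x, y⁆, ?_, ?_⟩
  · exact Subgroup.commutator_mem_commutator hx1 hy1
  · exact Subgroup.commutator_mem_commutator hx2 hy2

theorem starProd_extensible_iff {G : Type*} [Group G] [Finite G]
    (U V : Subgroup (G × G)) (hU : diag G ≤ U) (hV : diag G ≤ V)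
    (hUe : commutator G ⊓ k1 U = k1 ⁅U, U⁆)
    (hVe : commutator G ⊓ k1 V = k1 ⁅V, V⁆) :
    commutator G ⊓ k1 (starProd U V) = k1 ⁅starProd U V, starProd U V⁆ ↔
      (k1 (starProd U V) ⊓ commutator G : Subgroup G) =
        ((k1 U ⊓ commutator G : Subgroup G) : Set G) *
          ((k1 V ⊓ commutator G : Subgroup G) : Set G) := by
  set W := starProd U V with hW
  have hUW : U ≤ W := left_le_starProd U V hV
  have hVW : V ≤ W := right_le_starProd U V hU
  have hUW' : ⁅U, U⁆ ≤ ⁅W, W⁆ := Subgroup.commutator_mono hUW hUW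
  have hVW' : ⁅V, V⁆ ≤ ⁅W, W⁆ := Subgroup.commutator_mono hVW hVW
  -- claim A : the product set is contained in k1 ⁅W,W⁆
  have claimA : ((k1 U ⊓ commutator G : Subgroup G) : Set G) *
      ((k1 V ⊓ commutator G : Subgroup G) : Set G) ⊆ (k1 ⁅W, W⁆ : Set G) := by
    rintro g ⟨a, ha, b, hb, rfl⟩
    have ha' : a ∈ k1 ⁅U, U⁆ := by rw [← hUe]; rw [inf_comm]; exact ha
    have hb' : b ∈ k1 ⁅V, V⁆ := by rw [← hVe]; rw [inf_comm]; exact hb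
    exact (k1 ⁅W, W⁆).mul_mem (hUW' ha') (hVW' hb')
  -- k1 ⁅W,W⁆ ≤ commutator G ⊓ k1 W always
  have hback : k1 ⁅W, W⁆ ≤ commutator G ⊓ k1 W :=
    le_inf (k1_commutator_le W) (fun g hg => commSub_le W hg)
  constructor
  · intro h
    apply Set.Subset.antisymm
    · rintro g ⟨hg1, hg2⟩
      have hg' : g ∈ k1 ⁅W, W⁆ := by rw [← h]; exact ⟨hg2, hg1⟩
      obtain ⟨x, hgx, hx1⟩ := commutator_starProd_le U V hg'
      have hxG' : x ∈ commutator G := k1_commutator_le V hx1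
      have hxV : x ∈ k1 V := commSub_le V hx1
      -- g = (g * x⁻¹) * x
      refine ⟨g * x⁻¹, ⟨?_, ?_⟩, x, ⟨hxV, hxG'⟩, by group⟩
      · -- (g*x⁻¹, 1) ∈ U
        have h1 : ((g, x) : G × G) ∈ U := commSub_le U hgx
        have h2 : ((x⁻¹, x⁻¹) : G × G) ∈ U := hU (mem_diag x⁻¹)
        have := U.mul_mem h1 h2
        exact mem_k1.mpr (by simpa using this)
      · exact (commutator G).mul_mem hg2 ((commutator G).inv_mem hxG')
    · intro g hg
      obtain ⟨a, ha, b, hb, rfl⟩ := hg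
      constructor
      · exact (k1 W).mul_mem (hUW ha.1) (hVW hb.1)
      · exact (commutator G).mul_mem ha.2 hb.2
  · intro h
    apply le_antisymm _ hback
    rintro g ⟨hg1, hg2⟩
    have : g ∈ ((k1 U ⊓ commutator G : Subgroup G) : Set G) *
        ((k1 V ⊓ commutator G : Subgroup G) : Set G) := by
      rw [← h]; exact ⟨hg2, hg1⟩
    exact claimA this
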